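/- arXiv:2108.05274 — 2 statements merged into one kernel-verified Lean document; each statement's English description precedes it below -/
import Mathlib

section
/- Let v ∈ ℝⁿ and let q be v sorted in nonincreasing order. Define ρ = max{1 ≤ j ≤ n : q_j + (1/j)(1 − ∑_{i=1}^j q_i) > 0} and ξ = (1/ρ)(1 − ∑_{i=1}^ρ q_i). Then the vector w with w_i = max{v_i + ξ, 0} lies in the probability simplex (w_i ≥ 0 and ∑ w_i = 1). -/
theorem simplex_projection_formula (n : ℕ) (hn : 1 ≤ n) (v q : Fin n → ℝ)
    (hperm : ∃ σ : Equiv.Perm (Fin n), q = v ∘ σ)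
    (hsorted : ∀ i j : Fin n, i ≤ j → q j ≤ q i)
    (ρ : Fin n)
    (hρmem : q ρ + (1 / ((ρ : ℕ) + 1 : ℝ)) * (1 - ∑ i ∈ Finset.Iic ρ, q i) > 0)
    (hρmax : ∀ j : Fin n, q j + (1 / ((j : ℕ) + 1 : ℝ)) * (1 - ∑ i ∈ Finset.Iic j, q i) > 0 → j ≤ ρ)
    (ξ : ℝ) (hξ : ξ = (1 / ((ρ : ℕ) + 1 : ℝ)) * (1 - ∑ i ∈ Finset.Iic ρ, q i)) :
    (∀ i, 0 ≤ max (v i + ξ) 0) ∧ ∑ i, max (v i + ξ) 0 = 1 := by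
  constructor
  · intro i; exact le_max_right _ _
  obtain ⟨σ, hσ⟩ := hperm
  have hsum : ∑ i, max (v i + ξ) 0 = ∑ i, max (q i + ξ) 0 := by
    rw [hσ]
    exact (Equiv.sum_comp σ (fun i => max (v i + ξ) 0)).symm
  rw [hsum]
  have hρpos : (0 : ℝ) < ((ρ : ℕ) + 1 : ℝ) := by positivity
  have hξeq : ((ρ : ℕ) + 1 : ℝ) * ξ = 1 - ∑ i ∈ Finset.Iic ρ, q i := by
    rw [hξ]; field_simp
  -- positive part on Iic ρ
  have hpos : ∀ i : Fin n, i ≤ ρ → 0 < q i + ξ := by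
    intro i hi
    have h1 : q ρ ≤ q i := hsorted i ρ hi
    have h2 : 0 < q ρ + ξ := by rw [hξ]; linarith [hρmem]
    linarith
  -- negative part beyond ρ
  have hneg : ∀ i : Fin n, ρ < i → q i + ξ ≤ 0 := by
    intro i hi
    have hjlt : (ρ : ℕ) + 1 < n := lt_of_le_of_lt (Nat.succ_le_of_lt hi) i.isLt
    set j : Fin n := ⟨(ρ : ℕ) + 1, hjlt⟩ with hj
    have hji : j ≤ i := by
      simp only [Fin.le_def, hj]
      exact Nat.succ_le_of_lt hi
    have hqij : q i ≤ q j := hsorted j i hji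
    have hIic : Finset.Iic j = insert j (Finset.Iic ρ) := by
      ext x
      simp only [Finset.mem_Iic, Finset.mem_insert, Fin.le_def, Fin.ext_iff, hj]
      omega
    have hjnotin : j ∉ Finset.Iic ρ := by
      simp only [Finset.mem_Iic, Fin.le_def, hj]
      omega
    have hSj : ∑ x ∈ Finset.Iic j, q x = q j + ∑ x ∈ Finset.Iic ρ, q x := by
      rw [hIic, Finset.sum_insert hjnotin]
    have hnot : ¬ (q j + (1 / ((j : ℕ) + 1 : ℝ)) * (1 - ∑ x ∈ Finset.Iic j, q x) > 0) := by
      intro h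
      have := hρmax j h
      simp only [Fin.le_def, hj] at this
      omega
    push_neg at hnot
    have hjval : ((j : ℕ) : ℝ) = (ρ : ℕ) + 1 := by simp [hj]
    rw [hjval, hSj] at hnot
    have hρ2pos : (0 : ℝ) < ((ρ : ℕ) + 1 + 1 : ℝ) := by positivity
    have key : (((ρ : ℕ) : ℝ) + 1 + 1) * q j + (1 - (q j + ∑ x ∈ Finset.Iic ρ, q x)) ≤ 0 := by
      have hc : (((ρ : ℕ) : ℝ) + 1 + 1) * (1 / (((ρ : ℕ) : ℝ) + 1 + 1)) = 1 :=
        mul_one_div_cancel (ne_of_gt hρ2pos)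
      have h := mul_le_mul_of_nonneg_left hnot (le_of_lt hρ2pos)
      rw [mul_zero, mul_add, ← mul_assoc, hc, one_mul] at h
      linarith
    -- key gives (ρ+1) q j ≤ Sρ - 1 = -(ρ+1) ξ
    have h2 : (((ρ : ℕ) : ℝ) + 1) * q j ≤ -((((ρ : ℕ) : ℝ) + 1) * ξ) := by
      rw [hξeq]; linarith
    have h3 : q j + ξ ≤ 0 := by
      nlinarith
    linarith
  -- split the sum
  rw [← Finset.sum_add_sum_compl (Finset.Iic ρ)]
  have h1 : ∑ i ∈ Finset.Iic ρ, max (q i + ξ) 0 = ∑ i ∈ Finset.Iic ρ, (q i + ξ) := by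
    apply Finset.sum_congr rfl
    intro i hi
    exact max_eq_left (le_of_lt (hpos i (Finset.mem_Iic.mp hi)))
  have h2 : ∑ i ∈ (Finset.Iic ρ)ᶜ, max (q i + ξ) 0 = 0 := by
    apply Finset.sum_eq_zero
    intro i hi
    have : ρ < i := by
      simp only [Finset.mem_compl, Finset.mem_Iic] at hi
      exact lt_of_not_ge hi
    exact max_eq_right (hneg i this)
  rw [h1, h2, add_zero, Finset.sum_add_distrib, Finset.sum_const]
  have hcard : (Finset.Iic ρ).card = (ρ : ℕ) + 1 := by
    simp [Fin.card_Iic]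
  rw [hcard, nsmul_eq_mul]
  push_cast
  linarith [hξeq]
end

section
/- Let v ∈ ℝⁿ and let w* be the Euclidean projection of v onto the probability simplex. Then there exists ξ ∈ ℝ such that w*_i = max{v_i + ξ, 0} for all i. -/
theorem simplex_projection_soft_threshold (n : ℕ) (hn : 1 ≤ n) (v w : Fin n → ℝ)
    (hw : (∀ i, 0 ≤ w i) ∧ ∑ i, w i = 1)
    (hmin : ∀ w' : Fin n → ℝ, (∀ i, 0 ≤ w' i) → ∑ i, w' i = 1 →
      ∑ i, (w i - v i) ^ 2 ≤ ∑ i, (w' i - v i) ^ 2) :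
    ∃ ξ : ℝ, ∀ i, w i = max (v i + ξ) 0 := by
  obtain ⟨hnn, hsum⟩ := hw
  -- key monotonicity lemma
  have key : ∀ i j : Fin n, i ≠ j → 0 < w i → w i - v i ≤ w j - v j := by
    intro i j hij hpos
    by_contra hlt
    push_neg at hlt
    set D : ℝ := (w j - v j) - (w i - v i) with hD
    have hDneg : D < 0 := by simp [hD]; linarith
    set ε : ℝ := min (w i) (-D / 2) with hε
    have hεpos : 0 < ε := lt_min hpos (by linarith)
    have hεwi : ε ≤ w i := min_le_left _ _
    have hεD : ε ≤ -D / 2 := min_le_right _ _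
    set w' : Fin n → ℝ := fun k => if k = i then w i - ε else if k = j then w j + ε else w k
      with hw'
    have hji : j ≠ i := hij.symm
    have hsplit : ∀ f : Fin n → ℝ,
        ∑ k, f k = f i + (f j + ∑ k ∈ (Finset.univ.erase i).erase j, f k) := by
      intro f
      rw [Finset.add_sum_erase _ f (by simp [hji]), Finset.add_sum_erase _ f (by simp)]
    have hw'nn : ∀ k, 0 ≤ w' k := by
      intro k
      simp only [hw']
      split_ifs with h1 h2
      · linarith
      · linarith [hnn j]
      · exact hnn k
    have hw'sum : ∑ k, w' k = 1 := by
      rw [hsplit w] at hsum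
      rw [hsplit w']
      have hi : w' i = w i - ε := by simp [hw']
      have hj : w' j = w j + ε := by simp [hw', hji]
      have hrest : ∑ k ∈ (Finset.univ.erase i).erase j, w' k
          = ∑ k ∈ (Finset.univ.erase i).erase j, w k := by
        apply Finset.sum_congr rfl
        intro k hk
        simp only [Finset.mem_erase] at hk
        simp [hw', hk.1, hk.2.1]
      rw [hi, hj, hrest]; linarith
    have hle := hmin w' hw'nn hw'sum
    rw [hsplit (fun k => (w k - v k) ^ 2), hsplit (fun k => (w' k - v k) ^ 2)] at hle
    have hi : w' i = w i - ε := by simp [hw']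
    have hj : w' j = w j + ε := by simp [hw', hji]
    have hrest : ∑ k ∈ (Finset.univ.erase i).erase j, (w' k - v k) ^ 2
        = ∑ k ∈ (Finset.univ.erase i).erase j, (w k - v k) ^ 2 := by
      apply Finset.sum_congr rfl
      intro k hk
      simp only [Finset.mem_erase] at hk
      simp [hw', hk.1, hk.2.1]
    rw [hi, hj, hrest] at hle
    nlinarith [hεpos, hεD, hεwi]
  -- there is a positive coordinate
  have hex : ∃ i, 0 < w i := by
    by_contra h
    push_neg at h
    have : ∑ i, w i ≤ 0 := Finset.sum_nonpos (fun i _ => h i)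
    linarith
  obtain ⟨i₀, hi₀⟩ := hex
  refine ⟨w i₀ - v i₀, fun i => ?_⟩
  rcases eq_or_lt_of_le (hnn i) with hz | hp
  · -- w i = 0
    have hii : i₀ ≠ i := by rintro rfl; linarith
    have := key i₀ i hii hi₀
    rw [← hz] at this ⊢
    rw [max_eq_right]; linarith
  · -- w i > 0
    have heq : w i - v i = w i₀ - v i₀ := by
      rcases eq_or_ne i i₀ with rfl | hne
      · rfl
      · exact le_antisymm (key i i₀ hne hp) (key i₀ i hne.symm hi₀)
    rw [max_eq_left] <;> linarith
end
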